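/- arXiv:1611.00090 — 4 statements merged into one kernel-verified Lean document; each statement's English description precedes it below -/
import Mathlib

section
/- Let f : ℝ^n → ℝ be continuously differentiable such that for all x, y ∈ ℝ^n, ‖∇f(x) − ∇f(y)‖ ≤ L‖x − y‖ and ⟨∇f(x) − ∇f(y), x − y⟩ ≥ μ‖x − y‖², where 0 < μ ≤ L. Let x* be a global minimizer of f on ℝ^n and f* = f(x*). Let (x_i) be a sequence such that for each i there exists γ_i ∈ ℝ with x_{i+1} = x_i − γ_i ∇f(x_i) and f(x_{i+1}) ≤ f(x_i − t ∇f(x_i)) for every t ∈ ℝ. Then for all i ≥ 0, f(x_{i+1}) − f* ≤ ((L − μ)/(L + μ))² (f(x_i) − f*). -/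
open scoped RealInnerProductSpace

set_option maxHeartbeats 1000000

open InnerProductSpace

section CauchyAux
variable {n : ℕ}


lemma inner_gradient_apply (f : EuclideanSpace ℝ (Fin n) → ℝ) (x v : EuclideanSpace ℝ (Fin n)) :
    ⟪gradient f x, v⟫ = fderiv ℝ f x v := by
  rw [gradient, toDual_symm_apply]

lemma hasDerivAt_line (f : EuclideanSpace ℝ (Fin n) → ℝ) (hf : ContDiff ℝ 1 f)
    (x v : EuclideanSpace ℝ (Fin n)) (t : ℝ) :
    HasDerivAt (fun s : ℝ => f (x + s • v)) ⟪gradient f (x + t • v), v⟫ t := by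
  have hd : HasFDerivAt f (fderiv ℝ f (x + t • v)) (x + t • v) :=
    (hf.differentiable one_ne_zero (x + t • v)).hasFDerivAt
  have hl : HasDerivAt (fun s : ℝ => x + s • v) v t := by
    simpa using ((hasDerivAt_id t).smul_const v).const_add x
  rw [inner_gradient_apply]
  exact hd.comp_hasDerivAt t hl

lemma continuous_gradient (f : EuclideanSpace ℝ (Fin n) → ℝ) (hf : ContDiff ℝ 1 f) :
    Continuous (gradient f) := by
  have : Continuous (fderiv ℝ f) := hf.continuous_fderiv one_ne_zero
  exact ((toDual ℝ (EuclideanSpace ℝ (Fin n))).symm.continuous).comp this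

lemma integral_line (f : EuclideanSpace ℝ (Fin n) → ℝ) (hf : ContDiff ℝ 1 f)
    (x v : EuclideanSpace ℝ (Fin n)) :
    f (x + v) - f x = ∫ t in (0:ℝ)..1, ⟪gradient f (x + t • v), v⟫ := by
  have hc : Continuous (fun t : ℝ => ⟪gradient f (x + t • v), v⟫) := by
    exact Continuous.inner ((continuous_gradient f hf).comp (by continuity)) continuous_const
  have := intervalIntegral.integral_eq_sub_of_hasDerivAt
    (f := fun s : ℝ => f (x + s • v)) (f' := fun t : ℝ => ⟪gradient f (x + t • v), v⟫)
    (fun t _ => hasDerivAt_line f hf x v t) (hc.intervalIntegrable 0 1)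
  rw [this]
  norm_num

lemma lower_bound (μ : ℝ) (f : EuclideanSpace ℝ (Fin n) → ℝ) (hf : ContDiff ℝ 1 f)
    (hSC : ∀ x y : EuclideanSpace ℝ (Fin n),
      ⟪gradient f x - gradient f y, x - y⟫ ≥ μ * ‖x - y‖ ^ 2)
    (x y : EuclideanSpace ℝ (Fin n)) :
    f x + ⟪gradient f x, y - x⟫ + μ / 2 * ‖y - x‖ ^ 2 ≤ f y := by
  set v := y - x with hv
  have hxy : y = x + v := by rw [hv]; abel
  have hcont : Continuous (fun t : ℝ => ⟪gradient f (x + t • v), v⟫) :=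
    Continuous.inner ((continuous_gradient f hf).comp (continuous_const.add (continuous_id.smul continuous_const))) continuous_const
  have hint : f (x + v) - f x = ∫ t in (0:ℝ)..1, ⟪gradient f (x + t • v), v⟫ :=
    integral_line f hf x v
  have hmono : ∫ t in (0:ℝ)..1, (⟪gradient f x, v⟫ + μ * ‖v‖ ^ 2 * t)
      ≤ ∫ t in (0:ℝ)..1, ⟪gradient f (x + t • v), v⟫ := by
    apply intervalIntegral.integral_mono_on (by norm_num)
    · exact (Continuous.add continuous_const (continuous_const.mul continuous_id)).intervalIntegrable 0 1
    · exact hcont.intervalIntegrable 0 1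
    · intro t ht
      rcases eq_or_lt_of_le ht.1 with h0 | h0
      · simp [← h0]
      · have hs := hSC (x + t • v) x
        have h1 : (x + t • v) - x = t • v := by abel
        rw [h1] at hs
        have h2 : ⟪gradient f (x + t • v) - gradient f x, t • v⟫
            = t * ⟪gradient f (x + t • v) - gradient f x, v⟫ := real_inner_smul_right _ _ _
        have h3 : ‖t • v‖ ^ 2 = t ^ 2 * ‖v‖ ^ 2 := by
          rw [norm_smul]; simp [Real.norm_eq_abs, mul_pow, sq_abs]
        rw [h2, h3] at hs
        have h4 : μ * t * ‖v‖ ^ 2 ≤ ⟪gradient f (x + t • v) - gradient f x, v⟫ := by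
          have := (mul_le_mul_iff_right₀ h0).mp (by nlinarith [hs] : t * (μ * t * ‖v‖ ^ 2) ≤ t * ⟪gradient f (x + t • v) - gradient f x, v⟫)
          linarith
        have h5 : ⟪gradient f (x + t • v), v⟫
            = ⟪gradient f x, v⟫ + ⟪gradient f (x + t • v) - gradient f x, v⟫ := by
          rw [inner_sub_left]; ring
        rw [h5]; nlinarith [h4]
  have hval : ∫ t in (0:ℝ)..1, (⟪gradient f x, v⟫ + μ * ‖v‖ ^ 2 * t)
      = ⟪gradient f x, v⟫ + μ / 2 * ‖v‖ ^ 2 := by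
    rw [intervalIntegral.integral_add (intervalIntegrable_const)
      ((intervalIntegral.intervalIntegrable_id).const_mul _)]
    rw [intervalIntegral.integral_const_mul, integral_id]
    simp
    ring
  rw [hxy]
  have := hmono
  rw [hval] at this
  linarith [hint ▸ this]

lemma upper_bound (L : ℝ) (f : EuclideanSpace ℝ (Fin n) → ℝ) (hf : ContDiff ℝ 1 f)
    (hLip : ∀ x y : EuclideanSpace ℝ (Fin n),
      ‖gradient f x - gradient f y‖ ≤ L * ‖x - y‖)
    (x y : EuclideanSpace ℝ (Fin n)) :
    f y ≤ f x + ⟪gradient f x, y - x⟫ + L / 2 * ‖y - x‖ ^ 2 := by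
  set v := y - x with hv
  have hxy : y = x + v := by rw [hv]; abel
  have hcont : Continuous (fun t : ℝ => ⟪gradient f (x + t • v), v⟫) :=
    Continuous.inner ((continuous_gradient f hf).comp (continuous_const.add (continuous_id.smul continuous_const))) continuous_const
  have hint : f (x + v) - f x = ∫ t in (0:ℝ)..1, ⟪gradient f (x + t • v), v⟫ :=
    integral_line f hf x v
  have hmono : ∫ t in (0:ℝ)..1, ⟪gradient f (x + t • v), v⟫
      ≤ ∫ t in (0:ℝ)..1, (⟪gradient f x, v⟫ + L * ‖v‖ ^ 2 * t) := by
    apply intervalIntegral.integral_mono_on (by norm_num)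
    · exact hcont.intervalIntegrable 0 1
    · exact (Continuous.add continuous_const (continuous_const.mul continuous_id)).intervalIntegrable 0 1
    · intro t ht
      have hs := hLip (x + t • v) x
      have h1 : (x + t • v) - x = t • v := by abel
      rw [h1] at hs
      have h3 : ‖t • v‖ = t * ‖v‖ := by
        rw [norm_smul]; simp [Real.norm_eq_abs, abs_of_nonneg ht.1]
      rw [h3] at hs
      have h5 : ⟪gradient f (x + t • v), v⟫
          = ⟪gradient f x, v⟫ + ⟪gradient f (x + t • v) - gradient f x, v⟫ := by
        rw [inner_sub_left]; ring
      have h6 : ⟪gradient f (x + t • v) - gradient f x, v⟫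
          ≤ ‖gradient f (x + t • v) - gradient f x‖ * ‖v‖ := real_inner_le_norm _ _
      have h7 : ‖gradient f (x + t • v) - gradient f x‖ * ‖v‖ ≤ L * (t * ‖v‖) * ‖v‖ :=
        mul_le_mul_of_nonneg_right hs (norm_nonneg _)
      rw [h5]; nlinarith [h6, h7]
  have hval : ∫ t in (0:ℝ)..1, (⟪gradient f x, v⟫ + L * ‖v‖ ^ 2 * t)
      = ⟪gradient f x, v⟫ + L / 2 * ‖v‖ ^ 2 := by
    rw [intervalIntegral.integral_add (intervalIntegrable_const)
      ((intervalIntegral.intervalIntegrable_id).const_mul _)]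
    rw [intervalIntegral.integral_const_mul, integral_id]
    simp
    ring
  rw [hxy]
  have := hmono
  rw [hval] at this
  linarith [hint ▸ this]

lemma interp (μ L : ℝ) (hμL : μ < L) (f : EuclideanSpace ℝ (Fin n) → ℝ) (hf : ContDiff ℝ 1 f)
    (hLip : ∀ x y : EuclideanSpace ℝ (Fin n),
      ‖gradient f x - gradient f y‖ ≤ L * ‖x - y‖)
    (hSC : ∀ x y : EuclideanSpace ℝ (Fin n),
      ⟪gradient f x - gradient f y, x - y⟫ ≥ μ * ‖x - y‖ ^ 2)
    (a b : EuclideanSpace ℝ (Fin n)) :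
    ‖gradient f a - gradient f b - μ • (a - b)‖ ^ 2
      ≤ (L - μ) * (2 * (f a - f b - ⟪gradient f b, a - b⟫) - μ * ‖a - b‖ ^ 2) := by
  have hd : (0:ℝ) < L - μ := by linarith
  set d : ℝ := L - μ with hdd
  set c : ℝ := (L - μ)⁻¹ with hcc
  have hc1 : d * c = 1 := mul_inv_cancel₀ hd.ne'
  set ga := gradient f a with hga
  set gb := gradient f b with hgb
  set w : EuclideanSpace ℝ (Fin n) := a - b with hw
  set u : EuclideanSpace ℝ (Fin n) := ga - gb - μ • w with hu
  set z : EuclideanSpace ℝ (Fin n) := a - c • u with hz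
  set U : ℝ := ‖u‖ ^ 2 with hU
  set W : ℝ := ⟪w, u⟫ with hW
  set P : ℝ := ⟪ga, u⟫ with hP
  set Qb : ℝ := ⟪gb, u⟫ with hQb
  set B : ℝ := ⟪gb, w⟫ with hB
  set nw : ℝ := ‖w‖ ^ 2 with hnw
  have hup := upper_bound L f hf hLip a z
  have hlow := lower_bound μ f hf hSC b z
  -- rewrite the vector quantities
  have e1 : z - a = -(c • u) := by rw [hz]; abel
  have e1' : ⟪ga, z - a⟫ = -(c * P) := by
    rw [e1, inner_neg_right, real_inner_smul_right, hP]
  have e2 : ‖z - a‖ ^ 2 = c ^ 2 * U := by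
    rw [e1, norm_neg, norm_smul, mul_pow, hU, Real.norm_eq_abs, sq_abs]
  have e3 : z - b = w - c • u := by rw [hz, hw]; abel
  have e3' : ⟪gb, z - b⟫ = B - c * Qb := by
    rw [e3, inner_sub_right, real_inner_smul_right, hB, hQb]
  have e4 : ‖z - b‖ ^ 2 = nw - 2 * (c * W) + c ^ 2 * U := by
    rw [e3, norm_sub_sq_real, real_inner_smul_right, norm_smul, mul_pow,
      Real.norm_eq_abs, sq_abs, hnw, hW, hU]
  have e5 : P - Qb = U + μ * W := by
    have hab : ga - gb = u + μ • w := by rw [hu]; abel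
    have : ⟪ga - gb, u⟫ = ⟪u, u⟫ + μ * ⟪w, u⟫ := by
      rw [hab, inner_add_left, real_inner_smul_left]
    rw [inner_sub_left] at this
    rw [hP, hQb, hU, hW, ← real_inner_self_eq_norm_sq]
    linarith [this]
  rw [e1', e2] at hup
  rw [e3', e4] at hlow
  clear_value U W P Qb B nw d c
  have hchain : f b + (B - c * Qb) + μ / 2 * (nw - 2 * (c * W) + c ^ 2 * U)
      ≤ f a + -(c * P) + L / 2 * (c ^ 2 * U) := le_trans hlow hup
  have hd2 : (0:ℝ) < d ^ 2 := by positivity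
  have h3 := mul_le_mul_of_nonneg_left hchain hd2.le
  have eL : d ^ 2 * (f b + (B - c * Qb) + μ / 2 * (nw - 2 * (c * W) + c ^ 2 * U))
      = d ^ 2 * (f b + B) - d * Qb + μ / 2 * (d ^ 2 * nw) - μ * (d * W) + μ / 2 * U := by
    have h1 : d ^ 2 * c = d := by
      calc d ^ 2 * c = d * (d * c) := by ring
      _ = d := by rw [hc1]; ring
    have h2 : d ^ 2 * c ^ 2 = 1 := by
      calc d ^ 2 * c ^ 2 = (d * c) * (d * c) := by ring
      _ = 1 := by rw [hc1]; ring
    linear_combination (-Qb - μ * W) * h1 + (μ / 2 * U) * h2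
  have eR : d ^ 2 * (f a + -(c * P) + L / 2 * (c ^ 2 * U))
      = d ^ 2 * f a - d * P + (d + μ) / 2 * U := by
    have h1 : d ^ 2 * c = d := by
      calc d ^ 2 * c = d * (d * c) := by ring
      _ = d := by rw [hc1]; ring
    have h2 : d ^ 2 * c ^ 2 = 1 := by
      calc d ^ 2 * c ^ 2 = (d * c) * (d * c) := by ring
      _ = 1 := by rw [hc1]; ring
    have hLe : L = d + μ := by rw [hdd]; ring
    linear_combination (-P) * h1 + (L / 2 * U) * h2 + (U / 2) * hLe
  rw [eL, eR] at h3
  have e5d : d * P - d * Qb - d * U - μ * (d * W) = 0 := by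
    have h6 : d * (P - Qb) = d * (U + μ * W) := by rw [e5]
    linear_combination h6
  have e6 : d * (d * (2 * (f a - f b - B) - μ * nw) - U)
      = 2 * ((d ^ 2 * f a - d * P + (d + μ) / 2 * U)
          - (d ^ 2 * (f b + B) - d * Qb + μ / 2 * (d ^ 2 * nw) - μ * (d * W) + μ / 2 * U))
        + 2 * (d * P - d * Qb - d * U - μ * (d * W)) := by ring
  have h4 : 0 ≤ d * (d * (2 * (f a - f b - B) - μ * nw) - U) := by
    rw [e6]; linarith [h3, e5d]
  have h5 : 0 ≤ d * (2 * (f a - f b - B) - μ * nw) - U := by nlinarith [h4, hd]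
  linarith [h5]

lemma expand_norm (c1 c2 c3 c4 : ℝ) (a b p q : EuclideanSpace ℝ (Fin n)) :
    ‖c1 • a + c2 • b + c3 • p + c4 • q‖ ^ 2
      = c1 ^ 2 * ⟪a, a⟫ + c2 ^ 2 * ⟪b, b⟫ + c3 ^ 2 * ⟪p, p⟫ + c4 ^ 2 * ⟪q, q⟫
        + 2 * c1 * c2 * ⟪a, b⟫ + 2 * c1 * c3 * ⟪a, p⟫ + 2 * c1 * c4 * ⟪a, q⟫
        + 2 * c2 * c3 * ⟪b, p⟫ + 2 * c2 * c4 * ⟪b, q⟫ + 2 * c3 * c4 * ⟪p, q⟫ := by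
  rw [← real_inner_self_eq_norm_sq]
  simp only [inner_add_left, inner_add_right, real_inner_smul_left, real_inner_smul_right]
  rw [real_inner_comm b a, real_inner_comm p a, real_inner_comm q a, real_inner_comm p b,
    real_inner_comm q b, real_inner_comm q p]
  ring


end CauchyAux

/-- **Theorem (de Klerk–Glineur–Taylor).**
For `f ∈ F_{μ,L}(ℝⁿ)` (continuously differentiable, `L`-Lipschitz gradient,
`μ`-strongly convex with `0 < μ ≤ L`), with global minimizer `x*`, every iteration of the
gradient method with exact line search satisfies
`f(x_{i+1}) − f* ≤ ((L − μ)/(L + μ))² (f(x_i) − f*)`. -/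
theorem cauchy_linear_convergence_strongly_convex
    {n : ℕ} (μ L : ℝ) (hμ : 0 < μ) (hμL : μ ≤ L)
    (f : EuclideanSpace ℝ (Fin n) → ℝ) (hf : ContDiff ℝ 1 f)
    (hLip : ∀ x y : EuclideanSpace ℝ (Fin n),
      ‖gradient f x - gradient f y‖ ≤ L * ‖x - y‖)
    (hSC : ∀ x y : EuclideanSpace ℝ (Fin n),
      ⟪gradient f x - gradient f y, x - y⟫ ≥ μ * ‖x - y‖ ^ 2)
    (xstar : EuclideanSpace ℝ (Fin n)) (hxstar : ∀ x, f xstar ≤ f x)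
    (x : ℕ → EuclideanSpace ℝ (Fin n))
    (hstep : ∀ i : ℕ, ∃ γ : ℝ, x (i + 1) = x i - γ • gradient f (x i))
    (hels : ∀ i : ℕ, ∀ t : ℝ, f (x (i + 1)) ≤ f (x i - t • gradient f (x i))) :
    ∀ i : ℕ, f (x (i + 1)) - f xstar ≤ ((L - μ) / (L + μ)) ^ 2 * (f (x i) - f xstar) := by
  have hL0 : (0:ℝ) < L := lt_of_lt_of_le hμ hμL
  -- the gradient vanishes at the minimizer
  have gstar : gradient f xstar = 0 := by
    have hD := hasDerivAt_line f hf xstar (gradient f xstar) 0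
    simp only [zero_smul, add_zero] at hD
    have hlm : IsLocalMin (fun s : ℝ => f (xstar + s • gradient f xstar)) 0 := by
      apply Filter.Eventually.of_forall
      intro t
      show f (xstar + (0:ℝ) • gradient f xstar) ≤ f (xstar + t • gradient f xstar)
      rw [zero_smul, add_zero]
      exact hxstar _
    have hz : ⟪gradient f xstar, gradient f xstar⟫ = 0 := hlm.hasDerivAt_eq_zero hD
    exact inner_self_eq_zero.mp hz
  intro i
  obtain ⟨γ, hγ⟩ := hstep i
  -- orthogonality from exact line search
  have hpt : x i + γ • (-(gradient f (x i))) = x (i + 1) := by rw [hγ]; module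
  have hD := hasDerivAt_line f hf (x i) (-(gradient f (x i))) γ
  rw [hpt] at hD
  have hlm : IsLocalMin (fun s : ℝ => f (x i + s • (-(gradient f (x i))))) γ := by
    apply Filter.Eventually.of_forall
    intro t
    show f (x i + γ • (-(gradient f (x i)))) ≤ f (x i + t • (-(gradient f (x i))))
    rw [hpt, show x i + t • (-(gradient f (x i))) = x i - t • gradient f (x i) from by module]
    exact hels i t
  have horth0 : ⟪gradient f (x (i+1)), -(gradient f (x i))⟫ = 0 := hlm.hasDerivAt_eq_zero hD
  rw [inner_neg_right] at horth0
  have orth : ⟪gradient f (x (i+1)), gradient f (x i)⟫ = 0 := by linarith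
  rcases eq_or_lt_of_le hμL with heq | hlt
  · -- degenerate case μ = L : one step reaches the optimum
    subst heq
    have h1 := hLip (x i) xstar
    have h2 := hSC (x i) xstar
    rw [gstar, sub_zero] at h1 h2
    have h3 : ‖gradient f (x i) - μ • (x i - xstar)‖ ^ 2 ≤ 0 := by
      rw [norm_sub_sq_real, real_inner_smul_right]
      have h4 : ‖gradient f (x i)‖ ^ 2 ≤ (μ * ‖x i - xstar‖) ^ 2 := by
        apply pow_le_pow_left₀ (norm_nonneg _) h1
      have h5 : ‖μ • (x i - xstar)‖ ^ 2 = μ ^ 2 * ‖x i - xstar‖ ^ 2 := by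
        rw [norm_smul, mul_pow, Real.norm_eq_abs, sq_abs]
      rw [h5]
      nlinarith [h2, h4]
    have h6 : gradient f (x i) = μ • (x i - xstar) := by
      have h7 : ‖gradient f (x i) - μ • (x i - xstar)‖ ^ 2 = 0 :=
        le_antisymm h3 (by positivity)
      have h8 : gradient f (x i) - μ • (x i - xstar) = 0 := by
        rwa [pow_eq_zero_iff (by norm_num : 2 ≠ 0), norm_eq_zero] at h7
      linear_combination (norm := module) h8
    have h9 : x i - (1/μ) • gradient f (x i) = xstar := by
      rw [h6, smul_smul, one_div, inv_mul_cancel₀ hμ.ne', one_smul]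
      module
    have h10 := hels i (1/μ)
    rw [h9] at h10
    have h11 : ((μ - μ) / (μ + μ)) ^ 2 = 0 := by norm_num
    rw [h11]
    linarith [h10]
  · -- main case μ < L
    have hq1 := interp μ L hlt f hf hLip hSC (x i) (x (i+1))
    have hq2 := interp μ L hlt f hf hLip hSC xstar (x i)
    have hq3 := interp μ L hlt f hf hLip hSC xstar (x (i+1))
    rw [gstar] at hq2 hq3
    set a : EuclideanSpace ℝ (Fin n) := x i - xstar with ha
    set b : EuclideanSpace ℝ (Fin n) := x (i+1) - xstar with hb
    set p : EuclideanSpace ℝ (Fin n) := gradient f (x i) with hp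
    set q : EuclideanSpace ℝ (Fin n) := gradient f (x (i+1)) with hqd
    -- scalarize hq1
    have A1 : p - q - μ • (x i - x (i+1)) = (-μ) • a + μ • b + (1:ℝ) • p + (-1:ℝ) • q := by
      simp only [ha, hb, hp, hqd]; module
    have A2 : ‖x i - x (i+1)‖ ^ 2 = ⟪a, a⟫ - 2 * ⟪a, b⟫ + ⟪b, b⟫ := by
      rw [show x i - x (i+1) = a - b from by simp only [ha, hb]; abel, norm_sub_sq_real,
        ← real_inner_self_eq_norm_sq, ← real_inner_self_eq_norm_sq]
    have A3 : ⟪q, x i - x (i+1)⟫ = ⟪a, q⟫ - ⟪b, q⟫ := by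
      rw [show x i - x (i+1) = a - b from by simp only [ha, hb]; abel, inner_sub_right,
        real_inner_comm q a, real_inner_comm q b]
    rw [A1, expand_norm, A2, A3] at hq1
    -- scalarize hq2
    have B1 : (0 : EuclideanSpace ℝ (Fin n)) - p - μ • (xstar - x i)
        = μ • a + (0:ℝ) • b + (-1:ℝ) • p + (0:ℝ) • q := by
      simp only [ha, hp]; module
    have B2 : ⟪p, xstar - x i⟫ = -⟪a, p⟫ := by
      rw [show xstar - x i = -a from by simp only [ha]; abel, inner_neg_right,
        real_inner_comm p a]
    have B3 : ‖xstar - x i‖ ^ 2 = ⟪a, a⟫ := by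
      rw [show xstar - x i = -a from by simp only [ha]; abel, norm_neg,
        ← real_inner_self_eq_norm_sq]
    rw [B1, expand_norm, B2, B3] at hq2
    -- scalarize hq3
    have C1 : (0 : EuclideanSpace ℝ (Fin n)) - q - μ • (xstar - x (i+1))
        = (0:ℝ) • a + μ • b + (0:ℝ) • p + (-1:ℝ) • q := by
      simp only [hb, hqd]; module
    have C2 : ⟪q, xstar - x (i+1)⟫ = -⟪b, q⟫ := by
      rw [show xstar - x (i+1) = -b from by simp only [hb]; abel, inner_neg_right,
        real_inner_comm q b]
    have C3 : ‖xstar - x (i+1)‖ ^ 2 = ⟪b, b⟫ := by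
      rw [show xstar - x (i+1) = -b from by simp only [hb]; abel, norm_neg,
        ← real_inner_self_eq_norm_sq]
    rw [C1, expand_norm, C2, C3] at hq3
    -- the two sums of squares
    have hn0 : (0:ℝ) ≤ ‖(L*(L+3*μ)) • a + (-(L*(L+μ))) • b + (-(3*L+μ)) • p + (-(L+μ)) • q‖ ^ 2 := by
      positivity
    rw [expand_norm] at hn0
    have hn1 : (0:ℝ) ≤ ‖(0:ℝ) • a + (2*μ*L*(L+μ)) • b + (-((L-μ)^2)) • p + (-((L+μ)^2)) • q‖ ^ 2 := by
      positivity
    rw [expand_norm] at hn1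
    -- orthogonality facts in scalar form
    have hpq : ⟪p, q⟫ = 0 := by rw [real_inner_comm]; exact orth
    have habq : ⟪a, q⟫ = ⟪b, q⟫ := by
      have h8 : a - b = γ • p := by simp only [ha, hb, hp]; rw [hγ]; module
      have h9 : ⟪a - b, q⟫ = 0 := by rw [h8, real_inner_smul_left, hpq, mul_zero]
      rw [inner_sub_left] at h9
      linarith
    rw [hpq, habq] at hq1
    rw [hpq, habq] at hn0
    rw [hpq] at hn1
    clear_value a b p q
    -- positive multipliers
    have c1pos : (0:ℝ) < L*(L+μ)*(L-μ)*(L+3*μ) := by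
      apply mul_pos (mul_pos (mul_pos hL0 (by linarith)) (by linarith)); linarith
    have c2pos : (0:ℝ) < 2*μ*L*(L-μ)*(L+3*μ) := by
      apply mul_pos (mul_pos (mul_pos (by linarith) hL0) (by linarith)); linarith
    have c3pos : (0:ℝ) < 2*μ*L*(L+μ)*(L+3*μ) := by
      apply mul_pos (mul_pos (mul_pos (by linarith) hL0) (by linarith)); linarith
    have c4pos : (0:ℝ) < μ*(L-μ) := mul_pos hμ (by linarith)
    have t1 := mul_nonneg c1pos.le (sub_nonneg.mpr hq1)
    have t2 := mul_nonneg c2pos.le (sub_nonneg.mpr hq2)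
    have t3 := mul_nonneg c3pos.le (sub_nonneg.mpr hq3)
    have t4 := mul_nonneg c4pos.le hn0
    have key : (0:ℝ) ≤ 2*L*(L-μ)*(L+3*μ) *
        ((L-μ)^2 * (f (x i) - f xstar) - (L+μ)^2 * (f (x (i+1)) - f xstar)) := by
      linarith [t1, t2, t3, t4, hn1]
    have cpos : (0:ℝ) < 2*L*(L-μ)*(L+3*μ) := by
      apply mul_pos (mul_pos (by linarith) (by linarith)); linarith
    have hD2 : (0:ℝ) ≤ (L-μ)^2 * (f (x i) - f xstar) - (L+μ)^2 * (f (x (i+1)) - f xstar) := by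
      nlinarith [key, cpos]
    rw [div_pow, div_mul_eq_mul_div, le_div_iff₀ (by positivity : (0:ℝ) < (L+μ)^2)]
    linarith [hD2]
end

section
/- Let f(x) = (1/2) xᵀQx + cᵀx, where Q ∈ ℝ^{n×n} is a symmetric positive semidefinite matrix with Q ≠ 0 and c ∈ ℝ^n. Assume there exists a vector x* minimizing f on ℝ^n and denote f* = f(x*). Let (x_i) be a sequence such that for each i there exists γ_i ∈ ℝ with x_{i+1} = x_i − γ_i ∇f(x_i) and f(x_{i+1}) ≤ f(x_i − t ∇f(x_i)) for every t ∈ ℝ. Then for all i ≥ 0, f(x_{i+1}) − f* ≤ (1 − λ⁺⁺_min(Q)/λ_max(Q))² (f(x_i) − f*), where λ⁺⁺_min(Q) is the smallest strictly positive eigenvalue of Q and λ_max(Q) is the largest eigenvalue of Q. -/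
open scoped RealInnerProductSpace Matrix

/-- The largest eigenvalue of a Hermitian real matrix. -/
noncomputable def lamMax {n : ℕ} {M : Matrix (Fin n) (Fin n) ℝ} (hM : M.IsHermitian) : ℝ :=
  ⨆ i, hM.eigenvalues i

/-- The smallest strictly positive eigenvalue of a Hermitian real matrix. -/
noncomputable def lamPosMin {n : ℕ} {M : Matrix (Fin n) (Fin n) ℝ} (hM : M.IsHermitian) : ℝ :=
  sInf {e : ℝ | (∃ i, hM.eigenvalues i = e) ∧ 0 < e}

section Aux

variable {n : ℕ}

local notation "E" => EuclideanSpace ℝ (Fin n)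

lemma aux_symm (Q : Matrix (Fin n) (Fin n) ℝ) (hQ : Q.IsHermitian) (u v : E) :
    ⟪Matrix.toEuclideanLin Q u, v⟫ = ⟪u, Matrix.toEuclideanLin Q v⟫ :=
  (Matrix.isHermitian_iff_isSymmetric.1 hQ) u v

lemma aux_eig (Q : Matrix (Fin n) (Fin n) ℝ) (hQ : Q.IsHermitian) (j : Fin n) :
    Matrix.toEuclideanLin Q (hQ.eigenvectorBasis j) =
      hQ.eigenvalues j • hQ.eigenvectorBasis j := by
  apply PiLp.ext
  intro i
  simpa using congrFun (hQ.mulVec_eigenvectorBasis j) i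

/-- coefficient formula -/
lemma aux_coef (Q : Matrix (Fin n) (Fin n) ℝ) (hQ : Q.IsHermitian) (v : E) (j : Fin n) :
    ⟪Matrix.toEuclideanLin Q v, hQ.eigenvectorBasis j⟫ = hQ.eigenvalues j * ⟪v, hQ.eigenvectorBasis j⟫ := by
  rw [aux_symm Q hQ, aux_eig Q hQ, real_inner_smul_right]

lemma aux_coef2 (Q : Matrix (Fin n) (Fin n) ℝ) (hQ : Q.IsHermitian) (v : E) (j : Fin n) :
    ⟪hQ.eigenvectorBasis j, Matrix.toEuclideanLin Q v⟫ =
      hQ.eigenvalues j * ⟪hQ.eigenvectorBasis j, v⟫ := by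
  rw [← aux_symm Q hQ, aux_eig Q hQ, real_inner_smul_left]

/-- quadratic form formula -/
lemma aux_form (Q : Matrix (Fin n) (Fin n) ℝ) (hQ : Q.IsHermitian) (v : E) :
    ⟪v, Matrix.toEuclideanLin Q v⟫ =
      ∑ j, hQ.eigenvalues j * ⟪v, hQ.eigenvectorBasis j⟫ ^ 2 := by
  rw [← OrthonormalBasis.sum_inner_mul_inner hQ.eigenvectorBasis v (Matrix.toEuclideanLin Q v)]
  refine Finset.sum_congr rfl fun j _ => ?_
  have hc : ⟪hQ.eigenvectorBasis j, v⟫ = ⟪v, hQ.eigenvectorBasis j⟫ := real_inner_comm _ _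
  rw [aux_coef2 Q hQ v j, hc]
  ring

/-- norm squared formula -/
lemma aux_normsq (Q : Matrix (Fin n) (Fin n) ℝ) (hQ : Q.IsHermitian) (v : E) :
    ⟪Matrix.toEuclideanLin Q v, Matrix.toEuclideanLin Q v⟫ =
      ∑ j, hQ.eigenvalues j ^ 2 * ⟪v, hQ.eigenvectorBasis j⟫ ^ 2 := by
  rw [← OrthonormalBasis.sum_inner_mul_inner hQ.eigenvectorBasis]
  refine Finset.sum_congr rfl fun j _ => ?_
  have hc : ⟪hQ.eigenvectorBasis j, v⟫ = ⟪v, hQ.eigenvectorBasis j⟫ := real_inner_comm _ _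
  rw [aux_coef Q hQ v j, aux_coef2 Q hQ v j, hc]
  ring

lemma aux_cube (Q : Matrix (Fin n) (Fin n) ℝ) (hQ : Q.IsHermitian) (v : E) :
    ⟪Matrix.toEuclideanLin Q v, Matrix.toEuclideanLin Q (Matrix.toEuclideanLin Q v)⟫ =
      ∑ j, hQ.eigenvalues j ^ 3 * ⟪v, hQ.eigenvectorBasis j⟫ ^ 2 := by
  rw [aux_form Q hQ]
  refine Finset.sum_congr rfl fun j _ => ?_
  rw [aux_coef Q hQ v j]
  ring





lemma aux_hasGradientAt (Q : Matrix (Fin n) (Fin n) ℝ) (hQ : Q.IsHermitian)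
    (c : E) (y : E) :
    HasGradientAt (fun x : E => (1 / 2) * ⟪x, Matrix.toEuclideanLin Q x⟫ + ⟪c, x⟫)
      (Matrix.toEuclideanLin Q y + c) y := by
  set T := Matrix.toEuclideanLin Q with hTdef
  have hT : HasFDerivAt (fun x : E => T x) T.toContinuousLinearMap y :=
    T.toContinuousLinearMap.hasFDerivAt
  have h1 : HasFDerivAt (fun x : E => ⟪x, T x⟫)
      ((fderivInnerCLM ℝ (y, T y)).comp
        ((ContinuousLinearMap.id ℝ E).prod T.toContinuousLinearMap)) y :=
    (hasFDerivAt_id y).inner ℝ hT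
  have h2 : HasFDerivAt (fun x : E => ⟪c, x⟫) (innerSL ℝ c) y := (innerSL ℝ c).hasFDerivAt
  have h3 := (h1.const_mul (1/2 : ℝ)).add h2
  refine hasGradientAt_iff_hasFDerivAt.mpr ?_
  convert h3 using 1
  case e'_8 => rfl
  case e'_9 => rfl
  case e'_11 => rfl
  ext h
  simp only [InnerProductSpace.toDual_apply_apply, ContinuousLinearMap.add_apply,
    ContinuousLinearMap.coe_smul', Pi.smul_apply, ContinuousLinearMap.coe_comp',
    Function.comp_apply, ContinuousLinearMap.prod_apply, ContinuousLinearMap.coe_id', id_eq,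
    LinearMap.coe_toContinuousLinearMap', fderivInnerCLM_apply, innerSL_apply_apply, smul_eq_mul]
  rw [inner_add_left, ← aux_symm Q hQ y h, real_inner_comm h (T y)]
  ring

end Aux

set_option maxHeartbeats 1000000 in
/-- **Corollary (semidefinite quadratic case).** For `f(x) = ½ xᵀQx + cᵀx` with `Q ≠ 0`
symmetric positive semidefinite, if `f` attains a minimizer `x*`, then the gradient method
with exact line search satisfies
`f(x_{i+1}) − f* ≤ (1 − λ⁺⁺_min(Q)/λ_max(Q))² (f(x_i) − f*)`. -/
theorem cauchy_linear_convergence_psd_quadratic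
    {n : ℕ} (Q : Matrix (Fin n) (Fin n) ℝ) (hQ : Q.PosSemidef) (hQ0 : Q ≠ 0)
    (c : EuclideanSpace ℝ (Fin n))
    (f : EuclideanSpace ℝ (Fin n) → ℝ)
    (hf : ∀ x, f x = (1 / 2) * ⟪x, Matrix.toEuclideanLin Q x⟫ + ⟪c, x⟫)
    (xstar : EuclideanSpace ℝ (Fin n)) (hxstar : ∀ x, f xstar ≤ f x)
    (x : ℕ → EuclideanSpace ℝ (Fin n))
    (hstep : ∀ i : ℕ, ∃ γ : ℝ, x (i + 1) = x i - γ • gradient f (x i))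
    (hels : ∀ i : ℕ, ∀ t : ℝ, f (x (i + 1)) ≤ f (x i - t • gradient f (x i))) :
    ∀ i : ℕ, f (x (i + 1)) - f xstar ≤
      (1 - lamPosMin hQ.isHermitian / lamMax hQ.isHermitian) ^ 2 * (f (x i) - f xstar) := by
  classical
  set T := Matrix.toEuclideanLin Q with hTdef
  set lam := hQ.isHermitian.eigenvalues with hlamdef
  set b := hQ.isHermitian.eigenvectorBasis with hbdef
  set L := lamMax hQ.isHermitian with hLdef
  set μ := lamPosMin hQ.isHermitian with hμdef
  -- gradient formula
  have hgrad : ∀ y, gradient f y = T y + c := by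
    intro y
    rw [show f = fun x => (1 / 2) * ⟪x, T x⟫ + ⟪c, x⟫ from funext hf]
    exact (aux_hasGradientAt Q hQ.isHermitian c y).gradient
  -- first-order condition at the minimizer
  have hmin0 : T xstar + c = 0 := by
    have h1 : IsLocalMin f xstar := Filter.Eventually.of_forall hxstar
    have h2 := h1.fderiv_eq_zero
    have h3 : gradient f xstar = 0 := by unfold gradient; rw [h2]; simp
    rw [hgrad xstar] at h3
    exact h3
  have e1 : T xstar = -c := eq_neg_of_add_eq_zero_left hmin0
  -- nonemptiness of Fin n
  have hnn : n ≠ 0 := by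
    rintro rfl
    exact hQ0 (by ext i j; exact i.elim0)
  haveI : Nonempty (Fin n) := ⟨⟨0, Nat.pos_of_ne_zero hnn⟩⟩
  -- eigenvalue bounds
  have hlam0 : ∀ j, 0 ≤ lam j := hQ.eigenvalues_nonneg
  have hlamL : ∀ j, lam j ≤ L := fun j =>
    le_ciSup (Set.Finite.bddAbove (Set.finite_range lam)) j
  have hSfin : {e : ℝ | (∃ i, lam i = e) ∧ 0 < e}.Finite :=
    (Set.finite_range lam).subset (by rintro e ⟨⟨i, hi⟩, _⟩; exact ⟨i, hi⟩)
  have hSne : {e : ℝ | (∃ i, lam i = e) ∧ 0 < e}.Nonempty := by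
    by_contra h
    rw [Set.not_nonempty_iff_eq_empty] at h
    have hall : ∀ j, lam j = 0 := by
      intro j
      by_contra hj
      have hmem : lam j ∈ {e : ℝ | (∃ i, lam i = e) ∧ 0 < e} :=
        ⟨⟨j, rfl⟩, (hlam0 j).lt_of_ne (Ne.symm hj)⟩
      rw [h] at hmem
      exact Set.notMem_empty _ hmem
    apply hQ0
    have hT0 : Matrix.toEuclideanLin Q = 0 := by
      apply LinearMap.ext; intro v
      have h1 := aux_normsq Q hQ.isHermitian v
      simp only [← hlamdef, ← hbdef, hall, ne_eq, OfNat.ofNat_ne_zero, not_false_eq_true,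
        zero_pow, zero_mul, Finset.sum_const_zero] at h1
      show Matrix.toEuclideanLin Q v = (0 : _ →ₗ[ℝ] _) v
      rw [LinearMap.zero_apply]
      exact (inner_self_eq_zero (𝕜 := ℝ)).mp h1
    exact Matrix.toEuclideanLin.injective (by rw [hT0, map_zero])
  have hμmem : μ ∈ {e : ℝ | (∃ i, lam i = e) ∧ 0 < e} := hSne.csInf_mem hSfin
  have hμpos : 0 < μ := hμmem.2
  have hμL : μ ≤ L := by
    obtain ⟨⟨j, hj⟩, -⟩ := hμmem
    exact hj ▸ hlamL j
  have hLpos : 0 < L := lt_of_lt_of_le hμpos hμL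
  have hμle : ∀ j, lam j ≠ 0 → μ ≤ lam j := fun j hj =>
    csInf_le hSfin.bddBelow ⟨⟨j, rfl⟩, (hlam0 j).lt_of_ne (Ne.symm hj)⟩
  -- difference formula
  have hdiff : ∀ y, f y - f xstar = 1 / 2 * ⟪y - xstar, T (y - xstar)⟫ := by
    intro y
    have e2 : ⟪xstar, T y⟫ = -⟪c, y⟫ := by
      rw [← aux_symm Q hQ.isHermitian, e1, inner_neg_left]
    have e3 : ⟪xstar, T xstar⟫ = -⟪c, xstar⟫ := by
      rw [e1, inner_neg_right, real_inner_comm]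
    have e4 : ⟪y, T xstar⟫ = -⟪c, y⟫ := by
      rw [e1, inner_neg_right, real_inner_comm]
    rw [hf y, hf xstar, map_sub, inner_sub_left, inner_sub_right, inner_sub_right]
    rw [e2, e3, e4]
    ring
  -- the main estimate for step i
  intro i
  set d := x i - xstar with hddef
  set a : Fin n → ℝ := fun j => ⟪d, b j⟫ ^ 2 with hadef
  set A := ∑ j, lam j * a j with hAdef
  set Bq := ∑ j, lam j ^ 2 * a j with hBdef
  set Cq := ∑ j, lam j ^ 3 * a j with hCdef
  have ha0 : ∀ j, 0 ≤ a j := fun j => sq_nonneg _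
  have hA0 : 0 ≤ A := Finset.sum_nonneg fun j _ => mul_nonneg (hlam0 j) (ha0 j)
  have hC0 : 0 ≤ Cq := Finset.sum_nonneg fun j _ =>
    mul_nonneg (pow_nonneg (hlam0 j) 3) (ha0 j)
  have hgd : gradient f (x i) = T d := by
    rw [hgrad, hddef, map_sub, e1, sub_neg_eq_add]
  clear_value A Bq Cq
  clear_value a
  clear_value d
  -- line search values
  have hval : ∀ t : ℝ, f (x i - t • gradient f (x i)) - f xstar
      = 1 / 2 * (A - 2 * t * Bq + t ^ 2 * Cq) := by
    intro t
    have hpt : x i - t • T d - xstar = d - t • T d := by rw [hddef]; abel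
    have eA : ⟪d, T d⟫ = A := by
      rw [hAdef]; simp only [hadef]; exact aux_form Q hQ.isHermitian d
    have eB2 : ⟪T d, T d⟫ = Bq := by
      rw [hBdef]; simp only [hadef]; exact aux_normsq Q hQ.isHermitian d
    have eB1 : ⟪d, T (T d)⟫ = Bq := by
      rw [← aux_symm Q hQ.isHermitian]; exact eB2
    have eC : ⟪T d, T (T d)⟫ = Cq := by
      rw [hCdef]; simp only [hadef]; exact aux_cube Q hQ.isHermitian d
    have hexp : ⟪d - t • T d, T (d - t • T d)⟫ = A - 2 * t * Bq + t ^ 2 * Cq := by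
      rw [map_sub, map_smul, inner_sub_left, inner_sub_right, inner_sub_right,
        real_inner_smul_left, real_inner_smul_left, real_inner_smul_right,
        real_inner_smul_right, eA, eB1, eB2, eC]
      ring
    rw [hdiff, hgd, hpt, hexp]
  have hfx : f (x i) - f xstar = 1 / 2 * A := by
    have h0 := hval 0
    simpa using h0
  rw [hfx]
  rcases eq_or_lt_of_le hC0 with hC | hC
  · -- degenerate case : Cq = 0 forces A = 0
    rw [hCdef] at hC
    have hterm := (Finset.sum_eq_zero_iff_of_nonneg fun j _ =>
      mul_nonneg (pow_nonneg (hlam0 j) 3) (ha0 j)).mp hC.symm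
    have hA : A = 0 := by
      rw [hAdef]
      refine Finset.sum_eq_zero fun j hj => ?_
      rcases eq_or_ne (lam j) 0 with h | h
      · rw [h, zero_mul]
      · have h1 := hterm j (Finset.mem_univ j)
        have h2 : a j = 0 := by
          rcases mul_eq_zero.mp h1 with h3 | h3
          · exact absurd h3 (pow_ne_zero _ h)
          · exact h3
        rw [h2, mul_zero]
    have h1 : f (x (i + 1)) - f xstar ≤ 0 := by
      have h2 := hels i 0
      have h3 := hval 0
      rw [hA] at h3
      linarith
    rw [hA]
    nlinarith [h1]
  · -- main case : Cq > 0, use the exact line search with t = Bq / Cq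
    have h3 : f (x (i + 1)) - f xstar ≤ 1 / 2 * (A - Bq ^ 2 / Cq) := by
      have hls := hels i (Bq / Cq)
      have h2 := hval (Bq / Cq)
      have expand : 1 / 2 * (A - 2 * (Bq / Cq) * Bq + (Bq / Cq) ^ 2 * Cq)
          = 1 / 2 * (A - Bq ^ 2 / Cq) := by
        field_simp
        ring
      linarith [expand ▸ h2]
    refine h3.trans ?_
    -- key spectral inequality
    have hkey : Cq ≤ (μ + L) * Bq - μ * L * A := by
      have hsum : ∀ j ∈ Finset.univ, lam j ^ 3 * a j
          ≤ (μ + L) * (lam j ^ 2 * a j) - μ * L * (lam j * a j) := by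
        intro j _
        rcases eq_or_ne (lam j) 0 with h | h
        · simp [h]
        · have h1 := hμle j h
          have h2 := hlamL j
          have h4 : 0 ≤ a j * lam j * (lam j - μ) * (L - lam j) :=
            mul_nonneg (mul_nonneg (mul_nonneg (ha0 j) (hlam0 j)) (by linarith)) (by linarith)
          nlinarith [h4]
      have hss := Finset.sum_le_sum hsum
      rw [hCdef, hBdef, hAdef]
      calc (∑ j, lam j ^ 3 * a j)
          ≤ ∑ j, ((μ + L) * (lam j ^ 2 * a j) - μ * L * (lam j * a j)) := hss
        _ = (μ + L) * (∑ j, lam j ^ 2 * a j) - μ * L * (∑ j, lam j * a j) := by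
            rw [Finset.sum_sub_distrib, ← Finset.mul_sum, ← Finset.mul_sum]
    have h2Lμ : (0:ℝ) ≤ 2 * L - μ := by linarith
    have h6 : 0 ≤ μ * (2 * L - μ) * A := mul_nonneg (mul_nonneg hμpos.le h2Lμ) hA0
    have h7 := mul_le_mul_of_nonneg_left hkey h6
    have key2 : μ * (2 * L - μ) * (A * Cq) ≤ L ^ 2 * Bq ^ 2 := by
      have h8 := mul_le_mul_of_nonneg_left h7 (by positivity : (0:ℝ) ≤ 4 * L ^ 2)
      have hstep1 : 0 ≤ 4 * L ^ 2 * (L ^ 2 * Bq ^ 2 - μ * (2 * L - μ) * (A * Cq)) := by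
        nlinarith [h8, sq_nonneg (2 * L ^ 2 * Bq - μ * (2 * L - μ) * (μ + L) * A),
          mul_nonneg (mul_nonneg (mul_nonneg (mul_nonneg (sq_nonneg μ) h2Lμ)
            (by linarith : (0:ℝ) ≤ 2 * L + μ)) (sq_nonneg (L - μ))) (sq_nonneg A)]
      have h4L : (0:ℝ) < 4 * L ^ 2 := by positivity
      nlinarith [(mul_nonneg_iff_of_pos_left h4L).mp hstep1]
    have h4 : μ * (2 * L - μ) * A / L ^ 2 ≤ Bq ^ 2 / Cq := by
      rw [div_le_div_iff₀ (by positivity) hC]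
      nlinarith [key2]
    have h5 : (1 - μ / L) ^ 2 * (1 / 2 * A) = 1 / 2 * (A - μ * (2 * L - μ) * A / L ^ 2) := by
      field_simp
      ring
    rw [h5]
    linarith
end

section
/- Let 0 < μ̃ ≤ L̃ and 0 ≤ ε < 1. Let y₀, y₁, y* ∈ ℝ^m, g₀, g₁ ∈ ℝ^m, and h₀, h₁, h* ∈ ℝ satisfy: (1) h₀ ≥ h₁ + g₁ᵀ(y₀ − y₁) + (1/(2(1 − μ̃/L̃)))·((1/L̃)‖g₀ − g₁‖² + μ̃‖y₀ − y₁‖² − 2(μ̃/L̃)(g₁ − g₀)ᵀ(y₁ − y₀)); (2) h* ≥ h₀ + g₀ᵀ(y* − y₀) + (1/(2(1 − μ̃/L̃)))·((1/L̃)‖g₀‖² + μ̃‖y* − y₀‖² − 2(μ̃/L̃)g₀ᵀ(y₀ − y*)); (3) h* ≥ h₁ + g₁ᵀ(y* − y₁) + (1/(2(1 − μ̃/L̃)))·((1/L̃)‖g₁‖² + μ̃‖y* − y₁‖² − 2(μ̃/L̃)g₁ᵀ(y₁ − y*)); (4) 0 ≥ g₁ᵀ(y₁ − y₀); (5) 0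 ≥ g₀ᵀg₁ − ε‖g₀‖‖g₁‖. Assume μ̃ < L̃. Then h₁ − h* ≤ ρ_ε² (h₀ − h*), where ρ_ε = (1 − κ_ε)/(1 + κ_ε) and κ_ε = (μ̃(1 − ε))/(L̃(1 + ε)). -/
open scoped RealInnerProductSpace

set_option maxHeartbeats 1000000 in
private lemma aux_scalar (μ L ε N P Mi : ℝ) (hμ : 0 < μ) (hμL : μ < L)
    (hε0 : 0 ≤ ε) (hε1 : ε < 1)
    (hN : N = μ * (1 - ε)) (hP : P = L * (1 + ε) + μ * (1 - ε))
    (hMi : Mi = L * (1 + ε) - μ * (1 - ε))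
    (n0 n1 C q00 q01 q10 q11 D00 D01 D11 a0 a1 : ℝ)
    (hJ1 : 0 ≤ 2*(L-μ)*(a0 - a1 - q10 + q11) -
      (n0^2 - 2*C + n1^2 + μ*L*(D00 - 2*D01 + D11) - 2*μ*(q11 - q10 - q01 + q00)))
    (hJ2 : 0 ≤ 2*(L-μ)*(-a0 + q00) - (n0^2 + μ*L*D00 - 2*μ*q00))
    (hJ3 : 0 ≤ 2*(L-μ)*(-a1 + q11) - (n1^2 + μ*L*D11 - 2*μ*q11))
    (hJ4 : 0 ≤ q10 - q11)
    (hJ5 : C ≤ ε * n0 * n1)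
    (hS1 : 0 ≤ Mi^2*n0^2 + P^2*n1^2 + L^2*Mi^2*D00 + L^2*P^2*D11 - 2*Mi*P*C
      - 2*L*Mi^2*q00 + 2*L*Mi*P*q01 + 2*L*Mi*P*q10 - 2*L*P^2*q11 - 2*L^2*Mi*P*D01)
    (hS2 : 0 ≤ Mi^2*(L+μ)^2*n0^2 + P^2*(L-μ)^2*n1^2 + 4*μ^2*L^2*Mi^2*D00
      + 2*Mi*(L+μ)*P*(L-μ)*C - 4*μ*L*Mi^2*(L+μ)*q00 - 4*μ*L*Mi*P*(L-μ)*q10) :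
    P^2 * a1 ≤ Mi^2 * a0 := by
  have hL : 0 < L := hμ.trans hμL
  have hLμ : 0 < L - μ := by linarith
  have h2 : (0:ℝ) < 2 := by norm_num
  have hMi0 : 0 < Mi := by
    rw [hMi]
    nlinarith [mul_nonneg hε0 hL.le, mul_nonneg hε0 hμ.le]
  have hP0 : 0 < P := by
    rw [hP]
    nlinarith [mul_nonneg hε0 hL.le, mul_lt_mul_of_pos_left hε1 hμ]
  have hN0 : 0 < N := by
    rw [hN]; exact mul_pos hμ (by linarith)
  -- relaxed orthogonality combined with AM-GM
  have hmul : 2*P*Mi*C ≤ 2*P*Mi*(ε*n0*n1) :=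
    mul_le_mul_of_nonneg_left hJ5 (by positivity)
  have hAM : 0 ≤ ε * (Mi*n0 - P*n1)^2 := mul_nonneg hε0 (sq_nonneg _)
  have hH5 : 0 ≤ ε*(Mi^2*n0^2 + P^2*n1^2) - 2*P*Mi*C := by
    have e : ε*(Mi^2*n0^2 + P^2*n1^2) - 2*P*Mi*C
        = ε*(Mi*n0 - P*n1)^2 + (2*P*Mi*(ε*n0*n1) - 2*P*Mi*C) := by ring
    rw [e]
    have := sub_nonneg.mpr hmul
    linarith only [hAM, this]
  have hT1 := mul_nonneg (mul_pos (mul_pos hL (pow_pos hMi0 2)) hP0).le hJ1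
  have hT2 := mul_nonneg (mul_pos (mul_pos (mul_pos h2 hL) hN0) (pow_pos hMi0 2)).le hJ2
  have hT3 := mul_nonneg (mul_pos (mul_pos (mul_pos (mul_pos h2 hL) hN0) hMi0) hP0).le hJ3
  have hT4 := mul_nonneg (mul_pos (mul_pos (mul_pos (mul_pos h2 hL) hLμ) hMi0) (pow_pos hP0 2)).le hJ4
  have hT5 := mul_nonneg (mul_pos (mul_pos h2 hL) hLμ).le hH5
  have hT6 := mul_nonneg (mul_pos hMi0 hμ).le hS1
  have hT7 := mul_nonneg (by linarith : (0:ℝ) ≤ 1 - ε) hS2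
  have hsum := add_nonneg hT1 (add_nonneg hT2 (add_nonneg hT3 (add_nonneg hT4
    (add_nonneg hT5 (add_nonneg hT6 hT7)))))
  have hfac : 0 < 2*L*(L-μ)*Mi := mul_pos (mul_pos (mul_pos h2 hL) hLμ) hMi0
  subst hN hP hMi
  have key : 0 ≤ (2*L*(L-μ)*(L*(1+ε)-μ*(1-ε))) *
      ((L*(1+ε)-μ*(1-ε))^2*a0 - (L*(1+ε)+μ*(1-ε))^2*a1) := by
    linarith only [hsum]
  by_contra hcon
  push_neg at hcon
  have hneg : 0 < (L*(1+ε)+μ*(1-ε))^2*a1 - (L*(1+ε)-μ*(1-ε))^2*a0 := by linarith only [hcon]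
  have := mul_pos hfac hneg
  nlinarith only [key, this]

set_option maxHeartbeats 1000000 in
/-- **Core contraction lemma.** Given the three `F_{μ̃,L̃}`-interpolability conditions for
`(y₀, h₀, g₀)`, `(y₁, h₁, g₁)` and a minimizer `(y*, h*, 0)`, the exact-line-search
condition `g₁ᵀ(y₁ − y₀) ≤ 0`, and the relaxed orthogonality `g₀ᵀg₁ ≤ ε‖g₀‖‖g₁‖`,
one has `h₁ − h* ≤ ρ_ε² (h₀ − h*)` where `ρ_ε = (1 − κ_ε)/(1 + κ_ε)` and
`κ_ε = μ̃(1 − ε)/(L̃(1 + ε))`. -/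
theorem core_contraction_lemma
    {m : ℕ} (μt Lt ε : ℝ) (hμt : 0 < μt) (hμtLt : μt ≤ Lt) (hμtLt' : μt < Lt)
    (hε0 : 0 ≤ ε) (hε1 : ε < 1)
    (y0 y1 ystar g0 g1 : EuclideanSpace ℝ (Fin m)) (h0 h1 hstar : ℝ)
    (ineq1 : h0 ≥ h1 + ⟪g1, y0 - y1⟫ + (1 / (2 * (1 - μt / Lt))) *
      ((1 / Lt) * ‖g0 - g1‖ ^ 2 + μt * ‖y0 - y1‖ ^ 2
        - 2 * (μt / Lt) * ⟪g1 - g0, y1 - y0⟫))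
    (ineq2 : hstar ≥ h0 + ⟪g0, ystar - y0⟫ + (1 / (2 * (1 - μt / Lt))) *
      ((1 / Lt) * ‖g0‖ ^ 2 + μt * ‖ystar - y0‖ ^ 2
        - 2 * (μt / Lt) * ⟪g0, y0 - ystar⟫))
    (ineq3 : hstar ≥ h1 + ⟪g1, ystar - y1⟫ + (1 / (2 * (1 - μt / Lt))) *
      ((1 / Lt) * ‖g1‖ ^ 2 + μt * ‖ystar - y1‖ ^ 2
        - 2 * (μt / Lt) * ⟪g1, y1 - ystar⟫))
    (ineq4 : (0 : ℝ) ≥ ⟪g1, y1 - y0⟫)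
    (ineq5 : (0 : ℝ) ≥ ⟪g0, g1⟫ - ε * ‖g0‖ * ‖g1‖)
    (κε ρε : ℝ) (hκε : κε = μt * (1 - ε) / (Lt * (1 + ε)))
    (hρε : ρε = (1 - κε) / (1 + κε)) :
    h1 - hstar ≤ ρε ^ 2 * (h0 - hstar) := by
  have hL0 : 0 < Lt := hμt.trans hμtLt'
  have hLne : Lt ≠ 0 := ne_of_gt hL0
  have h1q : (0:ℝ) < 1 - μt / Lt := by
    rw [sub_pos]; exact (div_lt_one hL0).mpr hμtLt'
  have hqne : (1:ℝ) - μt / Lt ≠ 0 := ne_of_gt h1q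
  -- clear the interpolation denominators
  have hstep : ∀ a b c T : ℝ, a ≥ b + c + 1 / (2 * (1 - μt / Lt)) * T →
      Lt * T ≤ 2 * (Lt - μt) * (a - b - c) := by
    intro a b c T h
    have h2 : (0:ℝ) < 2 * (1 - μt / Lt) := by linarith
    have h3 : 1 / (2 * (1 - μt / Lt)) * T ≤ a - b - c := by linarith
    have h4 := mul_le_mul_of_nonneg_left h3 (le_of_lt h2)
    have h5 : 2 * (1 - μt / Lt) * (1 / (2 * (1 - μt / Lt)) * T) = T := by
      rw [← mul_assoc, mul_one_div_cancel (ne_of_gt h2), one_mul]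
    rw [h5] at h4
    have h7 := mul_le_mul_of_nonneg_left h4 (le_of_lt hL0)
    have h8 : Lt * (2 * (1 - μt / Lt) * (a - b - c)) = 2 * (Lt - μt) * (a - b - c) := by
      have hc : Lt * (2 * (1 - μt / Lt)) = 2 * (Lt - μt) := by
        field_simp <;> ring
      calc Lt * (2 * (1 - μt / Lt) * (a - b - c))
            = (Lt * (2 * (1 - μt / Lt))) * (a - b - c) := by ring
        _ = 2 * (Lt - μt) * (a - b - c) := by rw [hc]
    linarith only [h7, h8]
  have m1 := hstep _ _ _ _ ineq1
  have m2 := hstep _ _ _ _ ineq2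
  have m3 := hstep _ _ _ _ ineq3
  have e1 : Lt * ((1 / Lt) * ‖g0 - g1‖ ^ 2 + μt * ‖y0 - y1‖ ^ 2
      - 2 * (μt / Lt) * ⟪g1 - g0, y1 - y0⟫)
      = ‖g0 - g1‖ ^ 2 + μt * Lt * ‖y0 - y1‖ ^ 2 - 2 * μt * ⟪g1 - g0, y1 - y0⟫ := by
    field_simp <;> ring
  have e2 : Lt * ((1 / Lt) * ‖g0‖ ^ 2 + μt * ‖ystar - y0‖ ^ 2
      - 2 * (μt / Lt) * ⟪g0, y0 - ystar⟫)
      = ‖g0‖ ^ 2 + μt * Lt * ‖ystar - y0‖ ^ 2 - 2 * μt * ⟪g0, y0 - ystar⟫ := by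
    field_simp <;> ring
  have e3 : Lt * ((1 / Lt) * ‖g1‖ ^ 2 + μt * ‖ystar - y1‖ ^ 2
      - 2 * (μt / Lt) * ⟪g1, y1 - ystar⟫)
      = ‖g1‖ ^ 2 + μt * Lt * ‖ystar - y1‖ ^ 2 - 2 * μt * ⟪g1, y1 - ystar⟫ := by
    field_simp <;> ring
  have M1 : ‖g0 - g1‖ ^ 2 + μt * Lt * ‖y0 - y1‖ ^ 2 - 2 * μt * ⟪g1 - g0, y1 - y0⟫
      ≤ 2 * (Lt - μt) * (h0 - h1 - ⟪g1, y0 - y1⟫) := by linarith only [m1, e1]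
  have M2 : ‖g0‖ ^ 2 + μt * Lt * ‖ystar - y0‖ ^ 2 - 2 * μt * ⟪g0, y0 - ystar⟫
      ≤ 2 * (Lt - μt) * (hstar - h0 - ⟪g0, ystar - y0⟫) := by linarith only [m2, e2]
  have M3 : ‖g1‖ ^ 2 + μt * Lt * ‖ystar - y1‖ ^ 2 - 2 * μt * ⟪g1, y1 - ystar⟫
      ≤ 2 * (Lt - μt) * (hstar - h1 - ⟪g1, ystar - y1⟫) := by linarith only [m3, e3]
  -- rewrite in terms of d0 := y0 - ystar, d1 := y1 - ystar
  set d0 : EuclideanSpace ℝ (Fin m) := y0 - ystar with hd0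
  set d1 : EuclideanSpace ℝ (Fin m) := y1 - ystar with hd1
  have ed1 : y0 - y1 = d0 - d1 := by rw [hd0, hd1]; abel
  have ed2 : y1 - y0 = d1 - d0 := by rw [hd0, hd1]; abel
  have ed3 : ystar - y0 = -d0 := by rw [hd0]; abel
  have ed4 : ystar - y1 = -d1 := by rw [hd1]; abel
  rw [ed1, ed2] at M1
  rw [ed3] at M2
  rw [ed4] at M3
  rw [ed2] at ineq4
  simp only [inner_sub_left, inner_sub_right, inner_neg_right, norm_neg,
    norm_sub_sq_real] at M1 M2 M3 ineq4
  -- the two sum-of-squares certificates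
  have hS1 : (0:ℝ) ≤ ⟪(Lt*(1+ε)-μt*(1-ε)) • g0 - (Lt*(1+ε)+μt*(1-ε)) • g1
      - (Lt*(Lt*(1+ε)-μt*(1-ε))) • d0 + (Lt*(Lt*(1+ε)+μt*(1-ε))) • d1,
      (Lt*(1+ε)-μt*(1-ε)) • g0 - (Lt*(1+ε)+μt*(1-ε)) • g1
      - (Lt*(Lt*(1+ε)-μt*(1-ε))) • d0 + (Lt*(Lt*(1+ε)+μt*(1-ε))) • d1⟫ :=
    real_inner_self_nonneg
  have hS2 : (0:ℝ) ≤ ⟪((Lt*(1+ε)-μt*(1-ε))*(Lt+μt)) • g0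
      + ((Lt*(1+ε)+μt*(1-ε))*(Lt-μt)) • g1 - (2*μt*Lt*(Lt*(1+ε)-μt*(1-ε))) • d0,
      ((Lt*(1+ε)-μt*(1-ε))*(Lt+μt)) • g0
      + ((Lt*(1+ε)+μt*(1-ε))*(Lt-μt)) • g1 - (2*μt*Lt*(Lt*(1+ε)-μt*(1-ε))) • d0⟫ :=
    real_inner_self_nonneg
  simp only [inner_add_left, inner_add_right, inner_sub_left, inner_sub_right,
    real_inner_smul_left, real_inner_smul_right, real_inner_comm g0 g1,
    real_inner_comm g0 d0, real_inner_comm g0 d1, real_inner_comm g1 d0,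
    real_inner_comm g1 d1, real_inner_comm d0 d1, real_inner_self_eq_norm_sq g0,
    real_inner_self_eq_norm_sq g1, real_inner_self_eq_norm_sq d0,
    real_inner_self_eq_norm_sq d1] at hS1 hS2
  -- apply the scalar lemma
  have hA1 : 0 ≤ 2*(Lt-μt)*((h0 - hstar) - (h1 - hstar) - ⟪g1, d0⟫ + ⟪g1, d1⟫) -
      (‖g0‖^2 - 2*⟪g0, g1⟫ + ‖g1‖^2 + μt*Lt*(‖d0‖^2 - 2*⟪d0, d1⟫ + ‖d1‖^2)
        - 2*μt*(⟪g1, d1⟫ - ⟪g1, d0⟫ - ⟪g0, d1⟫ + ⟪g0, d0⟫)) := by linarith only [M1]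
  have hA2 : 0 ≤ 2*(Lt-μt)*(-(h0 - hstar) + ⟪g0, d0⟫) -
      (‖g0‖^2 + μt*Lt*‖d0‖^2 - 2*μt*⟪g0, d0⟫) := by linarith only [M2]
  have hA3 : 0 ≤ 2*(Lt-μt)*(-(h1 - hstar) + ⟪g1, d1⟫) -
      (‖g1‖^2 + μt*Lt*‖d1‖^2 - 2*μt*⟪g1, d1⟫) := by linarith only [M3]
  have hA4 : (0:ℝ) ≤ ⟪g1, d0⟫ - ⟪g1, d1⟫ := by linarith only [ineq4]
  have hA5 : ⟪g0, g1⟫ ≤ ε * ‖g0‖ * ‖g1‖ := by linarith only [ineq5]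
  have hA6 : 0 ≤ (Lt*(1+ε)-μt*(1-ε))^2*‖g0‖^2 + (Lt*(1+ε)+μt*(1-ε))^2*‖g1‖^2
      + Lt^2*(Lt*(1+ε)-μt*(1-ε))^2*‖d0‖^2 + Lt^2*(Lt*(1+ε)+μt*(1-ε))^2*‖d1‖^2
      - 2*(Lt*(1+ε)-μt*(1-ε))*(Lt*(1+ε)+μt*(1-ε))*⟪g0, g1⟫
      - 2*Lt*(Lt*(1+ε)-μt*(1-ε))^2*⟪g0, d0⟫
      + 2*Lt*(Lt*(1+ε)-μt*(1-ε))*(Lt*(1+ε)+μt*(1-ε))*⟪g0, d1⟫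
      + 2*Lt*(Lt*(1+ε)-μt*(1-ε))*(Lt*(1+ε)+μt*(1-ε))*⟪g1, d0⟫
      - 2*Lt*(Lt*(1+ε)+μt*(1-ε))^2*⟪g1, d1⟫
      - 2*Lt^2*(Lt*(1+ε)-μt*(1-ε))*(Lt*(1+ε)+μt*(1-ε))*⟪d0, d1⟫ := by linarith only [hS1]
  have hA7 : 0 ≤ (Lt*(1+ε)-μt*(1-ε))^2*(Lt+μt)^2*‖g0‖^2
      + (Lt*(1+ε)+μt*(1-ε))^2*(Lt-μt)^2*‖g1‖^2
      + 4*μt^2*Lt^2*(Lt*(1+ε)-μt*(1-ε))^2*‖d0‖^2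
      + 2*(Lt*(1+ε)-μt*(1-ε))*(Lt+μt)*(Lt*(1+ε)+μt*(1-ε))*(Lt-μt)*⟪g0, g1⟫
      - 4*μt*Lt*(Lt*(1+ε)-μt*(1-ε))^2*(Lt+μt)*⟪g0, d0⟫
      - 4*μt*Lt*(Lt*(1+ε)-μt*(1-ε))*(Lt*(1+ε)+μt*(1-ε))*(Lt-μt)*⟪g1, d0⟫ := by linarith only [hS2]
  have main := aux_scalar μt Lt ε (μt*(1-ε)) (Lt*(1+ε)+μt*(1-ε)) (Lt*(1+ε)-μt*(1-ε))
    hμt hμtLt' hε0 hε1 rfl rfl rfl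
    ‖g0‖ ‖g1‖ ⟪g0, g1⟫ ⟪g0, d0⟫ ⟪g0, d1⟫ ⟪g1, d0⟫ ⟪g1, d1⟫
    (‖d0‖^2) ⟪d0, d1⟫ (‖d1‖^2) (h0 - hstar) (h1 - hstar)
    (by linarith only [hA1]) (by linarith only [hA2]) (by linarith only [hA3])
    hA4 hA5 (by linarith only [hA6]) (by linarith only [hA7])
  -- conclude
  have hMi0 : 0 < Lt*(1+ε)-μt*(1-ε) := by
    linarith only [mul_nonneg hε0 hL0.le, mul_nonneg hε0 hμt.le, hμt, hμtLt']
  have hP0 : 0 < Lt*(1+ε)+μt*(1-ε) := by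
    linarith only [mul_nonneg hε0 hL0.le, mul_lt_mul_of_pos_left hε1 hμt, hμt, hμtLt', hL0]
  have hden : (0:ℝ) < Lt*(1+ε) := mul_pos hL0 (by linarith)
  have hdne : Lt*(1+ε) ≠ 0 := ne_of_gt hden
  have hPne : Lt*(1+ε)+μt*(1-ε) ≠ 0 := ne_of_gt hP0
  have hρ : ρε = (Lt*(1+ε)-μt*(1-ε))/(Lt*(1+ε)+μt*(1-ε)) := by
    rw [hρε, hκε]
    field_simp <;> ring
  rw [hρ, div_pow, div_mul_eq_mul_div, le_div_iff₀ (pow_pos hP0 2)]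
  linarith only [main]
end

section
/- Let h : ℝ^m → ℝ be continuously differentiable such that for all y, z ∈ ℝ^m, ‖∇h(y) − ∇h(z)‖ ≤ L‖y − z‖ and ⟨∇h(y) − ∇h(z), y − z⟩ ≥ μ‖y − z‖², where 0 < μ ≤ L. Assume h attains its minimum on ℝ^m. Let A be an m × n real matrix with m ≤ n having full row rank, and define f(x) = h(Ax). Then the set S of minimizers of f on ℝ^n is a nonempty closed convex set, and for every x ∈ ℝ^n, letting x′ be the Euclidean projection of x onto S, one has ⟨∇f(x), x − x′⟩ ≥ μ·λ_min(AAᵀ)·‖x − x′‖², where λ_min(AAᵀ) > 0 is the smallest eigenvalue of AAᵀ. -/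
open scoped RealInnerProductSpace Matrix

/-- The smallest eigenvalue of a Hermitian real matrix. -/
noncomputable def lamMin {m : ℕ} {M : Matrix (Fin m) (Fin m) ℝ} (hM : M.IsHermitian) : ℝ :=
  ⨅ i, hM.eigenvalues i

section AuxRSC

lemma aux_surj {m n : ℕ} (A : Matrix (Fin m) (Fin n) ℝ) (hrank : A.rank = m) :
    Function.Surjective (Matrix.toEuclideanLin A) := by
  have h1 : LinearMap.range A.mulVecLin = ⊤ := by
    apply Submodule.eq_top_of_finrank_eq
    rw [← Matrix.rank, hrank, Module.finrank_fin_fun]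
  intro y
  obtain ⟨x, hx⟩ := LinearMap.range_eq_top.mp h1 ((WithLp.equiv 2 (Fin m → ℝ)) y)
  refine ⟨(WithLp.equiv 2 (Fin n → ℝ)).symm x, ?_⟩
  erw [Matrix.toEuclideanLin_apply_piLp_toLp]
  rw [Matrix.mulVecLin_apply] at hx
  rw [hx]; exact (WithLp.equiv 2 (Fin m → ℝ)).symm_apply_apply y

lemma aux_eigen {m : ℕ} (M : Matrix (Fin m) (Fin m) ℝ) (hM : M.IsHermitian) (j : Fin m) :
    Matrix.toEuclideanLin M (hM.eigenvectorBasis j) =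
      hM.eigenvalues j • hM.eigenvectorBasis j := by
  apply (WithLp.equiv 2 (Fin m → ℝ)).injective
  simp only [WithLp.equiv_apply, Matrix.ofLp_toEuclideanLin_apply]
  exact hM.mulVec_eigenvectorBasis j

lemma aux_mul {m n k : ℕ} (A : Matrix (Fin m) (Fin n) ℝ) (B : Matrix (Fin n) (Fin k) ℝ)
    (x : EuclideanSpace ℝ (Fin k)) :
    Matrix.toEuclideanLin (A * B) x = Matrix.toEuclideanLin A (Matrix.toEuclideanLin B x) := by
  simp [Matrix.toEuclideanLin_apply, Matrix.mulVec_mulVec]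

lemma aux_ker_orth {E F : Type*} [NormedAddCommGroup E] [InnerProductSpace ℝ E]
    [NormedAddCommGroup F] [InnerProductSpace ℝ F]
    [FiniteDimensional ℝ E] [FiniteDimensional ℝ F]
    (T : E →ₗ[ℝ] F) : (LinearMap.ker T)ᗮ = LinearMap.range (LinearMap.adjoint T) := by
  have h : LinearMap.ker T = (LinearMap.range (LinearMap.adjoint T))ᗮ := by
    ext w
    simp only [LinearMap.mem_ker, Submodule.mem_orthogonal]
    constructor
    · rintro hw _ ⟨u, rfl⟩
      rw [LinearMap.adjoint_inner_left, hw, inner_zero_right]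
    · intro hw
      have h2 := hw (LinearMap.adjoint T (T w)) ⟨T w, rfl⟩
      rw [LinearMap.adjoint_inner_left] at h2
      exact inner_self_eq_zero.mp h2
  rw [h, Submodule.orthogonal_orthogonal]

lemma aux_inner_gradient {E : Type*} [NormedAddCommGroup E] [InnerProductSpace ℝ E]
    [CompleteSpace E] (f : E → ℝ) (x v : E) : ⟪gradient f x, v⟫ = fderiv ℝ f x v := by
  rw [gradient, InnerProductSpace.toDual_symm_apply]

lemma aux_gradient_zero {E : Type*} [NormedAddCommGroup E] [InnerProductSpace ℝ E]
    [CompleteSpace E] (f : E → ℝ) (y : E) (hy : ∀ z, f y ≤ f z) : gradient f y = 0 := by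
  have hl : IsLocalMin f y := Filter.Eventually.of_forall (fun z => hy z)
  rw [gradient, hl.fderiv_eq_zero, map_zero]

lemma aux_chain {E F : Type*} [NormedAddCommGroup E] [InnerProductSpace ℝ E] [CompleteSpace E]
    [NormedAddCommGroup F] [InnerProductSpace ℝ F] [CompleteSpace F]
    (h : F → ℝ) (hh : Differentiable ℝ h) (T : E →L[ℝ] F) (x v : E) :
    fderiv ℝ (fun x => h (T x)) x v = fderiv ℝ h (T x) (T v) := by
  have hc : fderiv ℝ (h ∘ T) x = (fderiv ℝ h (T x)).comp T := by
    rw [fderiv_comp x (hh _) T.differentiableAt, T.fderiv]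
  calc fderiv ℝ (fun x => h (T x)) x v = fderiv ℝ (h ∘ T) x v := rfl
    _ = (fderiv ℝ h (T x)).comp T v := by rw [hc]
    _ = fderiv ℝ h (T x) (T v) := rfl

/-- Orthogonality from the nearest-point property. -/
lemma aux_inner_zero {E : Type*} [NormedAddCommGroup E] [InnerProductSpace ℝ E]
    (v w : E) (hmin : ∀ t : ℝ, ‖v‖ ≤ ‖v - t • w‖) : ⟪v, w⟫ = 0 := by
  set c := ⟪v, w⟫ with hc
  set s := ‖w‖ ^ 2 with hs
  have hs0 : 0 ≤ s := by positivity
  have key : ∀ t : ℝ, 0 ≤ -(2 * t * c) + t ^ 2 * s := by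
    intro t
    have h1 : ‖v‖ ^ 2 ≤ ‖v - t • w‖ ^ 2 := by
      have := hmin t
      nlinarith [norm_nonneg v, norm_nonneg (v - t • w)]
    rw [norm_sub_sq_real, real_inner_smul_right, norm_smul] at h1
    simp only [Real.norm_eq_abs, mul_pow, sq_abs] at h1
    nlinarith [h1]
  have h2 := key (c / (s + 1))
  have hs1 : (0:ℝ) < s + 1 := by linarith
  have e : -(2 * (c / (s + 1)) * c) + (c / (s + 1)) ^ 2 * s = -(c ^ 2 * (s + 2)) / (s + 1) ^ 2 := by
    field_simp; ring
  rw [e] at h2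
  have h4 : 0 ≤ -(c ^ 2 * (s + 2)) := by
    have := (le_div_iff₀ (by positivity : (0:ℝ) < (s + 1) ^ 2)).mp h2
    simpa using this
  nlinarith [sq_nonneg c]

lemma aux_quad {m : ℕ} (hm : 0 < m) (M : Matrix (Fin m) (Fin m) ℝ) (hM : M.IsHermitian)
    (hnn : ∀ i, 0 ≤ hM.eigenvalues i) (u : EuclideanSpace ℝ (Fin m)) :
    lamMin hM * ⟪Matrix.toEuclideanLin M u, u⟫ ≤ ‖Matrix.toEuclideanLin M u‖ ^ 2 := by
  haveI : Nonempty (Fin m) := Fin.pos_iff_nonempty.mp hm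
  set b := hM.eigenvectorBasis with hb
  set lam := hM.eigenvalues with hlam
  set w := Matrix.toEuclideanLin M u with hw
  have hsym : (Matrix.toEuclideanLin M).IsSymmetric :=
    (Matrix.isHermitian_iff_isSymmetric).mp hM
  have hrepr : ∀ i, b.repr w i = lam i * b.repr u i := by
    intro i
    rw [OrthonormalBasis.repr_apply_apply, OrthonormalBasis.repr_apply_apply, hw,
      ← hsym (b i) u, aux_eigen M hM i, real_inner_smul_left]
  have hinner : ∀ x y : EuclideanSpace ℝ (Fin m), ⟪x, y⟫ = ∑ i, b.repr x i * b.repr y i := by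
    intro x y
    rw [← b.repr.inner_map_map x y, PiLp.inner_apply]
    simp [RCLike.inner_apply]
    exact Finset.sum_congr rfl (fun i _ => mul_comm _ _)
  have hmin_le : ∀ i, lamMin hM ≤ lam i := fun i => ciInf_le (Set.finite_range _).bddBelow i
  have hmin_nn : 0 ≤ lamMin hM := le_ciInf hnn
  rw [← real_inner_self_eq_norm_sq, hinner w w, hinner w u, Finset.mul_sum]
  apply Finset.sum_le_sum
  intro i _
  rw [hrepr i]
  have hkey := mul_nonneg (mul_nonneg (sub_nonneg.2 (hmin_le i)) (hnn i)) (sq_nonneg (b.repr u i))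
  nlinarith [hkey]

lemma aux_lamMin_pos {m n : ℕ} (hm : 0 < m) (A : Matrix (Fin m) (Fin n) ℝ)
    (hsurj : Function.Surjective (Matrix.toEuclideanLin A)) :
    0 < lamMin (Matrix.isHermitian_mul_conjTranspose_self A) := by
  haveI : Nonempty (Fin m) := Fin.pos_iff_nonempty.mp hm
  set hM := Matrix.isHermitian_mul_conjTranspose_self A with hMdef
  have hpos : ∀ i, 0 < hM.eigenvalues i := by
    intro i
    refine lt_of_le_of_ne (Matrix.eigenvalues_self_mul_conjTranspose_nonneg A i) (Ne.symm ?_)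
    intro h0
    set b := hM.eigenvectorBasis with hb
    have h1 : Matrix.toEuclideanLin (A * Aᴴ) (b i) = 0 := by
      rw [aux_eigen _ hM i, h0, zero_smul]
    set T := Matrix.toEuclideanLin A with hT
    have hT' : Matrix.toEuclideanLin Aᴴ = LinearMap.adjoint T :=
      Matrix.toEuclideanLin_conjTranspose_eq_adjoint A
    have h2 : T (LinearMap.adjoint T (b i)) = 0 := by
      rw [← hT', ← aux_mul]; exact h1
    have h3 : LinearMap.adjoint T (b i) = 0 := by
      have h3' : ⟪LinearMap.adjoint T (b i), LinearMap.adjoint T (b i)⟫ = 0 := by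
        rw [LinearMap.adjoint_inner_left, h2, inner_zero_right]
      exact inner_self_eq_zero.mp h3'
    obtain ⟨x, hx⟩ := hsurj (b i)
    have h4 : ⟪b i, b i⟫ = 0 := by
      nth_rewrite 2 [← hx]
      rw [← LinearMap.adjoint_inner_left, h3, inner_zero_left]
    exact b.orthonormal.ne_zero i (inner_self_eq_zero.mp h4)
  obtain ⟨i₀, hi₀⟩ := Finset.exists_min_image Finset.univ hM.eigenvalues
    ⟨Classical.arbitrary _, Finset.mem_univ _⟩
  calc (0:ℝ) < hM.eigenvalues i₀ := hpos i₀
    _ ≤ lamMin hM := le_ciInf (fun j => hi₀.2 j (Finset.mem_univ j))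

end AuxRSC

/-- **Restricted strong convexity of `f(x) = h(Ax)`.** For `h ∈ F_{μ,L}(ℝᵐ)` attaining its
minimum and `A` an `m × n` matrix (`m ≤ n`) of full row rank, the minimizer set `S` of
`f(x) = h(Ax)` is nonempty, closed and convex, `λ_min(AAᵀ) > 0`, and for every `x`, letting
`x′` be the Euclidean projection of `x` onto `S` (the point of `S` nearest to `x`),
`⟨∇f(x), x − x′⟩ ≥ μ λ_min(AAᵀ) ‖x − x′‖²`.
(Over `ℝ`, the conjugate transpose `Aᴴ` coincides with the transpose `Aᵀ`.) -/
theorem composite_is_restricted_strongly_convex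
    {m n : ℕ} (hm : 0 < m) (hmn : m ≤ n)
    (μ L : ℝ) (hμ : 0 < μ) (hμL : μ ≤ L)
    (h : EuclideanSpace ℝ (Fin m) → ℝ) (hh : ContDiff ℝ 1 h)
    (hLip : ∀ y z : EuclideanSpace ℝ (Fin m),
      ‖gradient h y - gradient h z‖ ≤ L * ‖y - z‖)
    (hSC : ∀ y z : EuclideanSpace ℝ (Fin m),
      ⟪gradient h y - gradient h z, y - z⟫ ≥ μ * ‖y - z‖ ^ 2)
    (hattain : ∃ y, ∀ z, h y ≤ h z)
    (A : Matrix (Fin m) (Fin n) ℝ) (hrank : A.rank = m)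
    (f : EuclideanSpace ℝ (Fin n) → ℝ)
    (hf : ∀ x, f x = h (Matrix.toEuclideanLin A x))
    (S : Set (EuclideanSpace ℝ (Fin n))) (hS : S = {x | ∀ y, f x ≤ f y}) :
    S.Nonempty ∧ IsClosed S ∧ Convex ℝ S ∧
      0 < lamMin (Matrix.isHermitian_mul_conjTranspose_self A) ∧
      ∀ x x' : EuclideanSpace ℝ (Fin n), x' ∈ S → (∀ z ∈ S, dist x x' ≤ dist x z) →
        ⟪gradient f x, x - x'⟫ ≥
          μ * lamMin (Matrix.isHermitian_mul_conjTranspose_self A) * ‖x - x'‖ ^ 2 := by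
  classical
  haveI : Nonempty (Fin m) := Fin.pos_iff_nonempty.mp hm
  obtain ⟨y₀, hy₀⟩ := hattain
  set T := Matrix.toEuclideanLin A with hTdef
  have hTsurj : Function.Surjective T := aux_surj A hrank
  have hdh : Differentiable ℝ h := hh.differentiable one_ne_zero
  have hgrad0 : gradient h y₀ = 0 := aux_gradient_zero h y₀ hy₀
  have huniq : ∀ y, (∀ z, h y ≤ h z) → y = y₀ := by
    intro y hy
    have hgy : gradient h y = 0 := aux_gradient_zero h y hy
    have hsc := hSC y y₀
    rw [hgy, hgrad0, sub_self, inner_zero_left] at hsc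
    have h2 : ‖y - y₀‖ ^ 2 = 0 := le_antisymm (by nlinarith) (sq_nonneg _)
    have hn0 : ‖y - y₀‖ = 0 := by
      exact (pow_eq_zero_iff two_ne_zero).mp h2
    rwa [norm_sub_eq_zero_iff] at hn0
  have hmem : ∀ x, x ∈ S ↔ T x = y₀ := by
    intro x
    rw [hS]; simp only [Set.mem_setOf_eq]
    constructor
    · intro hx
      apply huniq
      intro z
      obtain ⟨w, hw⟩ := hTsurj z
      have := hx w
      rwa [hf, hf, hw] at this
    · intro hx y
      rw [hf, hf, hx]
      exact hy₀ _
  have hSeq : S = T ⁻¹' {y₀} := Set.ext fun x => by rw [hmem x]; simp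
  obtain ⟨x₀, hx₀⟩ := hTsurj y₀
  refine ⟨⟨x₀, (hmem x₀).mpr hx₀⟩, ?_, ?_, aux_lamMin_pos hm A hTsurj, ?_⟩
  · rw [hSeq]
    exact IsClosed.preimage T.continuous_of_finiteDimensional isClosed_singleton
  · rw [hSeq]
    exact (convex_singleton y₀).linear_preimage T
  · intro x x' hx' hproj
    have hTx' : T x' = y₀ := (hmem x').mp hx'
    set v := x - x' with hv
    have horth : v ∈ (LinearMap.ker T)ᗮ := by
      rw [Submodule.mem_orthogonal]
      intro w hw
      rw [real_inner_comm]
      apply aux_inner_zero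
      intro t
      have hz : x' + t • w ∈ S := by
        rw [hmem, map_add, map_smul, LinearMap.mem_ker.mp hw, smul_zero, add_zero, hTx']
      have hd := hproj _ hz
      rw [dist_eq_norm, dist_eq_norm, sub_add_eq_sub_sub] at hd
      exact hd
    rw [aux_ker_orth T] at horth
    obtain ⟨u, hu⟩ := horth
    have hT' : Matrix.toEuclideanLin Aᴴ = LinearMap.adjoint T :=
      Matrix.toEuclideanLin_conjTranspose_eq_adjoint A
    have hMu : Matrix.toEuclideanLin (A * Aᴴ) u = T v := by
      rw [aux_mul, hT', hu]
    have hv2 : ⟪Matrix.toEuclideanLin (A * Aᴴ) u, u⟫ = ‖v‖ ^ 2 := by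
      calc ⟪Matrix.toEuclideanLin (A * Aᴴ) u, u⟫
          = ⟪T (LinearMap.adjoint T u), u⟫ := by rw [hMu, hu]
        _ = ⟪LinearMap.adjoint T u, LinearMap.adjoint T u⟫ := by
            rw [real_inner_comm, ← LinearMap.adjoint_inner_left]
        _ = ‖v‖ ^ 2 := by rw [hu, real_inner_self_eq_norm_sq]
    have hquad := aux_quad hm (A * Aᴴ) (Matrix.isHermitian_mul_conjTranspose_self A)
      (Matrix.eigenvalues_self_mul_conjTranspose_nonneg A) u
    rw [hv2, hMu] at hquad
    have hfeq : f = fun z => h (LinearMap.toContinuousLinearMap T z) := by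
      funext z; rw [hf]; rfl
    have hgradf : ⟪gradient f x, v⟫ = ⟪gradient h (T x), T v⟫ := by
      rw [aux_inner_gradient, aux_inner_gradient, hfeq]
      exact aux_chain h hdh (LinearMap.toContinuousLinearMap T) x v
    have hsc := hSC (T x) (T x')
    have hTv : T x - T x' = T v := (map_sub T x x').symm
    rw [hTv, hTx', hgrad0, sub_zero] at hsc
    calc μ * lamMin (Matrix.isHermitian_mul_conjTranspose_self A) * ‖v‖ ^ 2
        = μ * (lamMin (Matrix.isHermitian_mul_conjTranspose_self A) * ‖v‖ ^ 2) := by ring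
      _ ≤ μ * ‖T v‖ ^ 2 := mul_le_mul_of_nonneg_left hquad hμ.le
      _ ≤ ⟪gradient h (T x), T v⟫ := hsc
      _ = ⟪gradient f x, v⟫ := hgradf.symm
end
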